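/- Let (X,r) be a finite nondegenerate involutive square-free solution with graph Γ(X,r) (vertices X, an edge x →^a y whenever λ_a(x) = y). Then the vertex set X_i of each connected component of Γ is precisely an orbit of the left action of G(X,r) = ⟨λ_x⟩ on X; each X_i is r-invariant; and if mpl(X,r) = m, then each restricted solution (X_i, r|_{X_i×X_i}) satisfies mpl(X_i) ≤ m−1. -/

import Mathlib

/-- The quadratic map `r(x,y) = (λ_x(y), ρ_y(x))`. -/
def ybMap {X : Type*} (lam rho : X → X → X) : X × X → X × X :=
  fun p => (lam p.1 p.2, rho p.2 p.1)

/-- `r¹² = r × id` on `X × X × X`. -/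
def ybR12 {X : Type*} (lam rho : X → X → X) : X × X × X → X × X × X :=
  fun p => (lam p.1 p.2.1, rho p.2.1 p.1, p.2.2)

/-- `r²³ = id × r` on `X × X × X`. -/
def ybR23 {X : Type*} (lam rho : X → X → X) : X × X × X → X × X × X :=
  fun p => (p.1, lam p.2.1 p.2.2, rho p.2.2 p.2.1)

/-- The braid (Yang–Baxter) relation `r¹²r²³r¹² = r²³r¹²r²³`. -/
def YbBraided {X : Type*} (lam rho : X → X → X) : Prop :=
  ybR12 lam rho ∘ ybR23 lam rho ∘ ybR12 lam rho
    = ybR23 lam rho ∘ ybR12 lam rho ∘ ybR23 lam rho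

/-- `r` is involutive: `r ∘ r = id`. -/
def YbInvolutive {X : Type*} (lam rho : X → X → X) : Prop :=
  ∀ p, ybMap lam rho (ybMap lam rho p) = p

/-- Nondegeneracy: all `λ_x` and `ρ_x` are bijective. -/
def YbNondeg {X : Type*} (lam rho : X → X → X) : Prop :=
  (∀ x, Function.Bijective (lam x)) ∧ (∀ x, Function.Bijective (rho x))

/-- Condition lri: `ρ_x(λ_x(y)) = y = λ_x(ρ_x(y))`. -/
def YbLri {X : Type*} (lam rho : X → X → X) : Prop :=
  ∀ x y, rho x (lam x y) = y ∧ lam x (rho x y) = y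

/-- Square-free: `r(x,x) = (x,x)`. -/
def YbSquareFree {X : Type*} (lam rho : X → X → X) : Prop :=
  ∀ x, lam x x = x ∧ rho x x = x

/-- Iterated retraction equivalence relative to an `r`-invariant subset `S`. -/
def ybRetRelOn {X : Type*} (lam : X → X → X) (S : Set X) : ℕ → X → X → Prop
  | 0 => fun x y => x = y
  | n + 1 => fun x y => ∀ z ∈ S, ybRetRelOn lam S n (lam x z) (lam y z)

/-- Connectedness in the graph `Γ(X,r)`: the equivalence closure of the edge relation
`u →^a λ_a(u)`. -/
def ybConn {X : Type*} (lam : X → X → X) : X → X → Prop :=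
  Relation.EqvGen (fun u v => ∃ a, lam a u = v)


section retRelHelpers
variable {X : Type*} {lam : X → X → X} {S : Set X}

theorem retRel_refl : ∀ n x, ybRetRelOn lam S n x x
  | 0, _ => rfl
  | n+1, x => fun z _ => retRel_refl n (lam x z)

theorem retRel_symm : ∀ n {x y}, ybRetRelOn lam S n x y → ybRetRelOn lam S n y x
  | 0, _, _, h => h.symm
  | n+1, _, _, h => fun z hz => retRel_symm n (h z hz)

theorem retRel_trans : ∀ n {x y z}, ybRetRelOn lam S n x y → ybRetRelOn lam S n y z →
    ybRetRelOn lam S n x z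
  | 0, _, _, _, h, h' => h.trans h'
  | n+1, _, _, _, h, h' => fun w hw => retRel_trans n (h w hw) (h' w hw)

theorem retRel_mono {T : Set X} (hST : S ⊆ T) : ∀ n {x y}, ybRetRelOn lam T n x y →
    ybRetRelOn lam S n x y
  | 0, _, _, h => h
  | n+1, _, _, h => fun z hz => retRel_mono hST n (h z (hST hz))

end retRelHelpers

/-- for a finite nondegenerate involutive square-free solution
(left action encoded as `λ : X → Perm X`): (1) the connected components of `Γ(X,r)` are
exactly the orbits of `G(X,r) = ⟨λ_x⟩`; (2) each component is `r`-invariant;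
(3) if `mpl(X,r) = m` then each component, as a restricted solution, has `mpl ≤ m − 1`. -/
theorem components_are_orbits {X : Type*} [Finite X]
    (lam : X → Equiv.Perm X) (rho : X → X → X) (m : ℕ)
    (hndr : ∀ x : X, Function.Bijective (rho x))
    (hinv : YbInvolutive (fun x y => lam x y) rho)
    (hsf : YbSquareFree (fun x y => lam x y) rho)
    (hbr : YbBraided (fun x y => lam x y) rho)
    (hm : (∀ x y : X, ybRetRelOn (fun x y => lam x y) Set.univ m x y) ∧
      ∀ j < m, ¬ (∀ x y : X, ybRetRelOn (fun x y => lam x y) Set.univ j x y)) :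
    (∀ x y : X, ybConn (fun x y => lam x y) x y ↔
      ∃ g ∈ Subgroup.closure (Set.range lam), (g : Equiv.Perm X) x = y) ∧
    (∀ x y z : X, ybConn (fun x y => lam x y) x y → ybConn (fun x y => lam x y) x z →
      (ybConn (fun x y => lam x y) x (lam y z) ∧ ybConn (fun x y => lam x y) x (rho z y))) ∧
    (∀ x : X, ∀ y ∈ {w | ybConn (fun x y => lam x y) x w},
      ∀ z ∈ {w | ybConn (fun x y => lam x y) x w},
        ybRetRelOn (fun x y => lam x y) {w | ybConn (fun x y => lam x y) x w} (m - 1) y z) := by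
  refine ⟨?_, ?_, ?_⟩
  · intro x y
    constructor
    · intro h
      induction h with
      | rel u v h =>
          obtain ⟨a, ha⟩ := h
          exact ⟨lam a, Subgroup.subset_closure ⟨a, rfl⟩, ha⟩
      | refl u => exact ⟨1, one_mem _, rfl⟩
      | symm u v _ ih =>
          obtain ⟨g, hg, hgx⟩ := ih
          exact ⟨g⁻¹, inv_mem hg, by simp [← hgx]⟩
      | trans u v w _ _ ih1 ih2 =>
          obtain ⟨g, hg, hgx⟩ := ih1
          obtain ⟨g', hg', hgx'⟩ := ih2
          exact ⟨g' * g, mul_mem hg' hg, by simp [hgx, hgx']⟩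
    · rintro ⟨g, hg, rfl⟩
      have key : ∀ u : X, ybConn (fun x y => lam x y) u (g u) := by
        refine Subgroup.closure_induction ?_ ?_ ?_ ?_ hg
        · rintro f ⟨a, rfl⟩ u
          exact Relation.EqvGen.rel _ _ ⟨a, rfl⟩
        · intro u; exact Relation.EqvGen.refl u
        · intro f f' _ _ hf hf' u
          exact Relation.EqvGen.trans _ _ _ (hf' u) (hf (f' u))
        · intro f _ hf u
          have := hf (f⁻¹ u)
          simp only [Equiv.Perm.inv_def, Equiv.apply_symm_apply] at this
          exact Relation.EqvGen.symm _ _ this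
      exact key x
  · intro x y z hxy hxz
    constructor
    · exact Relation.EqvGen.trans _ _ _ hxz (Relation.EqvGen.rel _ _ ⟨y, rfl⟩)
    · have h1 : lam (lam y z) (rho z y) = y := congrArg Prod.fst (hinv (y, z))
      have hc : ybConn (fun x y => lam x y) (rho z y) y :=
        Relation.EqvGen.rel _ _ ⟨lam y z, h1⟩
      exact Relation.EqvGen.trans _ _ _ hxy (Relation.EqvGen.symm _ _ hc)
  · intro x y hy z hz
    have hconn : ybConn (fun x y => lam x y) y z :=
      Relation.EqvGen.trans _ _ _ (Relation.EqvGen.symm _ _ hy) hz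
    cases m with
    | zero => exact hm.1 y z
    | succ k =>
      refine retRel_mono (Set.subset_univ _) k ?_
      have key : ∀ (a : X) (u : X),
          ybRetRelOn (fun x y => lam x y) Set.univ k u (lam a u) := by
        intro a u
        have h : ybRetRelOn (fun x y => lam x y) Set.univ k (lam a u) (lam u u) :=
          hm.1 a u u (Set.mem_univ u)
        have hsfu : (lam u) u = u := (hsf u).1
        rw [hsfu] at h
        exact retRel_symm k h
      clear hy hz
      induction hconn with
      | rel u v h =>
          obtain ⟨a, rfl⟩ := h
          exact key a u
      | refl u => exact retRel_refl k u
      | symm u v _ ih => exact retRel_symm k ih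
      | trans u v w _ _ ih1 ih2 => exact retRel_trans k ih1 ih2
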